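/- Let H be a real Hilbert space, Q : H → ℝ a continuous quadratic form with associated bounded symmetric bilinear form, K₁, K₂ ∈ H linearly independent vectors in the kernel of Q (i.e., the associated self-adjoint operator annihilates K₁ and K₂), and B ∈ H. Assume there exists μ > 0 such that Q[ε] ≥ μ‖ε‖² − (1/μ)⟨ε,B⟩² for all ε ∈ H with ⟨ε,K₁⟩ = ⟨ε,K₂⟩ = 0, and assume ⟨B,K₁⟩ = ⟨B,K₂⟩ = 0. Then there exists ν > 0 such that for all ε ∈ H with |⟨ε,K₁⟩| + |⟨ε,K₂⟩| < ν‖ε‖, one has Q[ε] ≥ (μ/4)‖ε‖² − (4/μ)⟨ε,B⟩². -/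

import Mathlib

open RealInnerProductSpace

set_option maxHeartbeats 1000000 in
lemma aux_coercivity_on {H : Type*} [NormedAddCommGroup H] [InnerProductSpace ℝ H]
    (Q : H →L[ℝ] H →L[ℝ] ℝ) (hsymm : ∀ x y : H, Q x y = Q y x)
    (u₁ u₂ b : H)
    (h11 : ⟪u₁, u₁⟫ = 1) (h22 : ⟪u₂, u₂⟫ = 1) (h21 : ⟪u₂, u₁⟫ = 0)
    (hQ1 : ∀ y, Q u₁ y = 0) (hQ2 : ∀ y, Q u₂ y = 0)
    (hb1 : ⟪u₁, b⟫ = 0) (hb2 : ⟪u₂, b⟫ = 0)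
    (μ : ℝ) (hμ : 0 < μ)
    (hcoer : ∀ ε : H, ⟪ε, u₁⟫ = 0 → ⟪ε, u₂⟫ = 0 →
      Q ε ε ≥ μ * ‖ε‖ ^ 2 - (1 / μ) * ⟪ε, b⟫ ^ 2)
    (ε : H) (hst : ⟪ε, u₁⟫ ^ 2 + ⟪ε, u₂⟫ ^ 2 ≤ ‖ε‖ ^ 2 / 2) :
    Q ε ε ≥ (μ / 4) * ‖ε‖ ^ 2 - (4 / μ) * ⟪ε, b⟫ ^ 2 := by
  obtain ⟨s, hs⟩ : ∃ s : ℝ, s = ⟪ε, u₁⟫ := ⟨_, rfl⟩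
  obtain ⟨t, ht⟩ : ∃ t : ℝ, t = ⟪ε, u₂⟫ := ⟨_, rfl⟩
  obtain ⟨e, he⟩ : ∃ e : H, e = ε - (s • u₁ + t • u₂) := ⟨_, rfl⟩
  have h12 : ⟪u₁, u₂⟫ = 0 := by rw [real_inner_comm]; exact h21
  have heu₁ : ⟪e, u₁⟫ = 0 := by
    rw [he, inner_sub_left, inner_add_left, real_inner_smul_left,
      real_inner_smul_left, h11, h21, ← hs]
    ring
  have heu₂ : ⟪e, u₂⟫ = 0 := by
    rw [he, inner_sub_left, inner_add_left, real_inner_smul_left,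
      real_inner_smul_left, h12, h22, ← ht]
    ring
  have hεeq : ε = e + (s • u₁ + t • u₂) := by rw [he]; abel
  have hQp : ∀ y, Q (s • u₁ + t • u₂) y = 0 := by
    intro y
    rw [map_add, map_smul, map_smul, ContinuousLinearMap.add_apply,
      ContinuousLinearMap.smul_apply, ContinuousLinearMap.smul_apply,
      hQ1, hQ2]
    simp
  have hQp' : ∀ y, Q y (s • u₁ + t • u₂) = 0 := fun y => by
    rw [hsymm]; exact hQp y
  have hQeq : Q ε ε = Q e e := by
    conv_lhs => rw [hεeq]
    rw [map_add Q e (s • u₁ + t • u₂), ContinuousLinearMap.add_apply, hQp,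
      add_zero, map_add, hQp' e, add_zero]
  have hbeq : ⟪e, b⟫ = ⟪ε, b⟫ := by
    rw [he, inner_sub_left, inner_add_left, real_inner_smul_left,
      real_inner_smul_left, hb1, hb2]
    ring
  have hpnorm : ‖s • u₁ + t • u₂‖ ^ 2 = s ^ 2 + t ^ 2 := by
    rw [← real_inner_self_eq_norm_sq]
    simp only [inner_add_left, inner_add_right, real_inner_smul_left,
      real_inner_smul_right, h11, h22, h12, h21]
    ring
  have horth : ⟪e, s • u₁ + t • u₂⟫ = 0 := by
    rw [inner_add_right, real_inner_smul_right, real_inner_smul_right,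
      heu₁, heu₂]
    ring
  have hnormeq : ‖ε‖ ^ 2 = ‖e‖ ^ 2 + (s ^ 2 + t ^ 2) := by
    conv_lhs => rw [hεeq]
    rw [norm_add_sq_real, horth, hpnorm]
    ring
  rw [← hs, ← ht] at hst
  have hege : ‖e‖ ^ 2 ≥ ‖ε‖ ^ 2 / 2 := by linarith
  have hmain := hcoer e heu₁ heu₂
  rw [hbeq] at hmain
  rw [hQeq]
  have hbsq : (0:ℝ) ≤ ⟪ε, b⟫ ^ 2 := sq_nonneg _
  have key : μ * ‖e‖ ^ 2 ≥ μ / 4 * ‖ε‖ ^ 2 := by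
    nlinarith [sq_nonneg ‖ε‖]
  have hdiv : 1 / μ ≤ 4 / μ := by
    rw [div_le_div_iff₀ hμ hμ]
    nlinarith
  have h4 : (1 / μ) * ⟪ε, b⟫ ^ 2 ≤ (4 / μ) * ⟪ε, b⟫ ^ 2 :=
    mul_le_mul_of_nonneg_right hdiv hbsq
  linarith

set_option maxHeartbeats 1000000 in
theorem coercivity_almost_orthogonality {H : Type*} [NormedAddCommGroup H]
    [InnerProductSpace ℝ H] [CompleteSpace H]
    (Q : H →L[ℝ] H →L[ℝ] ℝ) (hsymm : ∀ x y : H, Q x y = Q y x)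
    (K₁ K₂ b : H) (hind : LinearIndependent ℝ ![K₁, K₂])
    (hker₁ : ∀ y : H, Q K₁ y = 0) (hker₂ : ∀ y : H, Q K₂ y = 0)
    (μ : ℝ) (hμ : 0 < μ)
    (hcoer : ∀ ε : H, ⟪ε, K₁⟫ = 0 → ⟪ε, K₂⟫ = 0 →
      Q ε ε ≥ μ * ‖ε‖ ^ 2 - (1 / μ) * ⟪ε, b⟫ ^ 2)
    (hb₁ : ⟪b, K₁⟫ = 0) (hb₂ : ⟪b, K₂⟫ = 0) :
    ∃ ν > (0 : ℝ), ∀ ε : H, |⟪ε, K₁⟫| + |⟪ε, K₂⟫| < ν * ‖ε‖ →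
      Q ε ε ≥ (μ / 4) * ‖ε‖ ^ 2 - (4 / μ) * ⟪ε, b⟫ ^ 2 := by
  have hK₁ne : K₁ ≠ 0 := by simpa using hind.ne_zero 0
  have hn1 : (0:ℝ) < ‖K₁‖ := norm_pos_iff.mpr hK₁ne
  obtain ⟨u₁, hu₁⟩ : ∃ u : H, u = ‖K₁‖⁻¹ • K₁ := ⟨_, rfl⟩
  obtain ⟨c, hc⟩ : ∃ c : ℝ, c = ⟪K₂, u₁⟫ := ⟨_, rfl⟩
  obtain ⟨w, hw⟩ : ∃ w : H, w = K₂ - c • u₁ := ⟨_, rfl⟩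
  have hK₁eq : K₁ = ‖K₁‖ • u₁ := by
    rw [hu₁, smul_smul, mul_inv_cancel₀ hn1.ne', one_smul]
  have hwne : w ≠ 0 := by
    intro hw0
    have hK₂eq' : K₂ = (c * ‖K₁‖⁻¹) • K₁ := by
      have h' : K₂ = c • u₁ := by rw [hw, sub_eq_zero] at hw0; exact hw0
      rw [h', hu₁, smul_smul]
    have h : (c * ‖K₁‖⁻¹) • K₁ + (-1 : ℝ) • K₂ = 0 := by
      rw [hK₂eq']; module
    have := (LinearIndependent.pair_iff.mp hind (c * ‖K₁‖⁻¹) (-1) h).2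
    norm_num at this
  have hnw : (0:ℝ) < ‖w‖ := norm_pos_iff.mpr hwne
  obtain ⟨u₂, hu₂⟩ : ∃ u : H, u = ‖w‖⁻¹ • w := ⟨_, rfl⟩
  have hweq : w = ‖w‖ • u₂ := by
    rw [hu₂, smul_smul, mul_inv_cancel₀ hnw.ne', one_smul]
  have hK₂e : K₂ = w + c • u₁ := by rw [hw]; abel
  -- orthonormality
  have h11 : ⟪u₁, u₁⟫ = 1 := by
    rw [hu₁, real_inner_smul_left, real_inner_smul_right,
      real_inner_self_eq_norm_sq]
    field_simp
  have hwu₁ : ⟪w, u₁⟫ = 0 := by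
    rw [hw, inner_sub_left, real_inner_smul_left, h11, ← hc]
    ring
  have h21 : ⟪u₂, u₁⟫ = 0 := by
    rw [hu₂, real_inner_smul_left, hwu₁, mul_zero]
  have h22 : ⟪u₂, u₂⟫ = 1 := by
    rw [hu₂, real_inner_smul_left, real_inner_smul_right,
      real_inner_self_eq_norm_sq]
    field_simp
  -- kernel facts
  have hQ1 : ∀ y, Q u₁ y = 0 := by
    intro y
    rw [hu₁, map_smul, ContinuousLinearMap.smul_apply, hker₁, smul_zero]
  have hQw : ∀ y, Q w y = 0 := by
    intro y
    rw [hw, map_sub, map_smul, ContinuousLinearMap.sub_apply,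
      ContinuousLinearMap.smul_apply, hker₂, hQ1, smul_zero, sub_zero]
  have hQ2 : ∀ y, Q u₂ y = 0 := by
    intro y
    rw [hu₂, map_smul, ContinuousLinearMap.smul_apply, hQw, smul_zero]
  -- b orthogonality
  have hK₁b : ⟪K₁, b⟫ = 0 := by rw [real_inner_comm]; exact hb₁
  have hK₂b : ⟪K₂, b⟫ = 0 := by rw [real_inner_comm]; exact hb₂
  have hb1 : ⟪u₁, b⟫ = 0 := by
    rw [hu₁, real_inner_smul_left, hK₁b, mul_zero]
  have hwb : ⟪w, b⟫ = 0 := by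
    rw [hw, inner_sub_left, real_inner_smul_left, hK₂b, hb1]
    ring
  have hb2 : ⟪u₂, b⟫ = 0 := by
    rw [hu₂, real_inner_smul_left, hwb, mul_zero]
  -- coercivity in terms of u₁, u₂
  have hcoer' : ∀ ε : H, ⟪ε, u₁⟫ = 0 → ⟪ε, u₂⟫ = 0 →
      Q ε ε ≥ μ * ‖ε‖ ^ 2 - (1 / μ) * ⟪ε, b⟫ ^ 2 := by
    intro ε h1 h2
    apply hcoer
    · rw [hK₁eq, real_inner_smul_right, h1, mul_zero]
    · rw [hK₂e, inner_add_right, real_inner_smul_right, h1, hweq,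
        real_inner_smul_right, h2]
      ring
  -- the constant
  obtain ⟨C, hCdef⟩ : ∃ C : ℝ, C = ‖K₁‖⁻¹ + ‖w‖⁻¹ * (1 + |c| * ‖K₁‖⁻¹) :=
    ⟨_, rfl⟩
  have hC : 0 < C := by rw [hCdef]; positivity
  refine ⟨(2 * C)⁻¹, by positivity, fun ε hε => ?_⟩
  apply aux_coercivity_on Q hsymm u₁ u₂ b h11 h22 h21 hQ1 hQ2 hb1 hb2 μ hμ hcoer' ε
  -- now the smallness bound
  have hs : ⟪ε, u₁⟫ = ‖K₁‖⁻¹ * ⟪ε, K₁⟫ := by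
    rw [hu₁, real_inner_smul_right]
  have ht : ⟪ε, u₂⟫ = ‖w‖⁻¹ * (⟪ε, K₂⟫ - c * ⟪ε, u₁⟫) := by
    rw [hu₂, real_inner_smul_right, hw, inner_sub_right, real_inner_smul_right]
  have hA0 : (0:ℝ) ≤ |⟪ε, K₁⟫| + |⟪ε, K₂⟫| := by positivity
  have habs1 : |⟪ε, u₁⟫| ≤ C * (|⟪ε, K₁⟫| + |⟪ε, K₂⟫|) := by
    rw [hs, abs_mul, abs_inv, abs_norm]
    have hCge : ‖K₁‖⁻¹ ≤ C := by
      rw [hCdef]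
      have : (0:ℝ) ≤ ‖w‖⁻¹ * (1 + |c| * ‖K₁‖⁻¹) := by positivity
      linarith
    nlinarith [abs_nonneg (⟪ε, K₁⟫ : ℝ), abs_nonneg (⟪ε, K₂⟫ : ℝ),
      inv_pos.mpr hn1]
  have habs2 : |⟪ε, u₂⟫| ≤ C * (|⟪ε, K₁⟫| + |⟪ε, K₂⟫|) := by
    rw [ht, abs_mul, abs_inv, abs_norm]
    have h2 : |⟪ε, u₁⟫| ≤ ‖K₁‖⁻¹ * |⟪ε, K₁⟫| := by
      rw [hs, abs_mul, abs_inv, abs_norm]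
    have h1 : |⟪ε, K₂⟫ - c * ⟪ε, u₁⟫| ≤
        |⟪ε, K₂⟫| + |c| * (‖K₁‖⁻¹ * |⟪ε, K₁⟫|) := by
      calc |⟪ε, K₂⟫ - c * ⟪ε, u₁⟫| ≤ |⟪ε, K₂⟫| + |c * ⟪ε, u₁⟫| := abs_sub _ _
        _ = |⟪ε, K₂⟫| + |c| * |⟪ε, u₁⟫| := by rw [abs_mul]
        _ ≤ |⟪ε, K₂⟫| + |c| * (‖K₁‖⁻¹ * |⟪ε, K₁⟫|) := by
            nlinarith [abs_nonneg c]
    calc ‖w‖⁻¹ * |⟪ε, K₂⟫ - c * ⟪ε, u₁⟫|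
        ≤ ‖w‖⁻¹ * (|⟪ε, K₂⟫| + |c| * (‖K₁‖⁻¹ * |⟪ε, K₁⟫|)) := by
          nlinarith [inv_pos.mpr hnw]
      _ ≤ C * (|⟪ε, K₁⟫| + |⟪ε, K₂⟫|) := by
          rw [hCdef]
          have t1 : (0:ℝ) ≤ ‖K₁‖⁻¹ * |⟪ε, K₁⟫| := by positivity
          have t2 : (0:ℝ) ≤ ‖K₁‖⁻¹ * |⟪ε, K₂⟫| := by positivity
          have t3 : (0:ℝ) ≤ ‖w‖⁻¹ * |⟪ε, K₁⟫| := by positivity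
          have t4 : (0:ℝ) ≤ ‖w‖⁻¹ * (|c| * (‖K₁‖⁻¹ * |⟪ε, K₂⟫|)) := by
            positivity
          nlinarith [t1, t2, t3, t4]
  have hCA : C * (|⟪ε, K₁⟫| + |⟪ε, K₂⟫|) ≤ ‖ε‖ / 2 := by
    have h1 : C * (|⟪ε, K₁⟫| + |⟪ε, K₂⟫|) ≤ C * ((2 * C)⁻¹ * ‖ε‖) := by
      nlinarith
    have h2 : C * ((2 * C)⁻¹ * ‖ε‖) = ‖ε‖ / 2 := by
      field_simp
    linarith
  have hs2 : ⟪ε, u₁⟫ ^ 2 ≤ (‖ε‖ / 2) ^ 2 := by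
    rw [← sq_abs]
    have := habs1.trans hCA
    nlinarith [abs_nonneg (⟪ε, u₁⟫ : ℝ)]
  have ht2 : ⟪ε, u₂⟫ ^ 2 ≤ (‖ε‖ / 2) ^ 2 := by
    rw [← sq_abs]
    have := habs2.trans hCA
    nlinarith [abs_nonneg (⟪ε, u₂⟫ : ℝ)]
  have hhalf : (‖ε‖ / 2) ^ 2 + (‖ε‖ / 2) ^ 2 = ‖ε‖ ^ 2 / 2 := by ring
  linarith
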